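/- (No gain from stochastic non-stationary agent-state policies) In a finite POMDP with agent state updated by a fixed recursive function φ, the supremum of the expected discounted reward over non-stationary stochastic agent-state policies equals the supremum over non-stationary deterministic agent-state policies: J_ZNS = J_ZND. -/

import Mathlib

open scoped BigOperators

section

variable {S A Y Z : Type*} [Fintype S] [Fintype A] [Fintype Y] [Fintype Z]

/-- Probability of a trajectory `(S_t,Y_t,A_t), …, (S_1,Y_1,A_1)` (listed most-recent
first) of a POMDP with initial law `ν` of `(S₁,Y₁)`, dynamics `P(s',y'|s,a)`, and a
history-dependent stochastic policy `π(a | past (y,a)-pairs, current y)`. -/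
noncomputable def probTraj (ν : S × Y → ℝ) (P : S → A → S × Y → ℝ)
    (π : List (Y × A) → Y → A → ℝ) : List (S × Y × A) → ℝ
  | [] => 1
  | (s, y, a) :: rest =>
      (match rest with
        | [] => ν (s, y)
        | (s₀, _, a₀) :: _ => P s₀ a₀ (s, y)) *
        π (rest.map fun u => (u.2.1, u.2.2)) y a * probTraj ν P π rest

/-- A valid (history-dependent) stochastic policy. -/
def validPol (π : List (Y × A) → Y → A → ℝ) : Prop :=
  ∀ h y, (∀ a, 0 ≤ π h y a) ∧ ∑ a, π h y a = 1

/-- Expected reward at time `t+1` (trajectories are indexed chronologically by `Fin (t+1)`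
and reversed into the most-recent-first convention). -/
noncomputable def expRtime (ν : S × Y → ℝ) (P : S → A → S × Y → ℝ) (r : S → A → ℝ)
    (π : List (Y × A) → Y → A → ℝ) (t : ℕ) : ℝ :=
  ∑ v : Fin (t + 1) → S × Y × A,
    probTraj ν P π (List.ofFn v).reverse * r (v (Fin.last t)).1 (v (Fin.last t)).2.2

/-- Performance `J^π = E^π[∑_{t≥1} γ^{t−1} R_t]` of a history-dependent policy. -/
noncomputable def valJ (γ : ℝ) (ν : S × Y → ℝ) (P : S → A → S × Y → ℝ)
    (r : S → A → ℝ) (π : List (Y × A) → Y → A → ℝ) : ℝ :=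
  ∑' t : ℕ, γ ^ t * expRtime ν P r π t

/-- The agent state `Z_t = σ_t(H_t)` generated by the recursive update
`Z₁ = φ₀(Y₁)`, `Z_{t+1} = φ(Z_t, Y_{t+1}, A_t)`; the history is given as the list of
past `(y,a)` pairs (most recent first) together with the current observation. -/
def sigAgg (φ0 : Y → Z) (φ : Z → Y → A → Z) : List (Y × A) → Y → Z
  | [], y => φ0 y
  | (y', a') :: rest, y => φ (sigAgg φ0 φ rest y') y a'

/-- The full trajectory obtained by attaching a state sequence to an observation-action
history (most recent first). -/
def zipSV (w : List (Y × A)) (sv : Fin w.length → S) : List (S × Y × A) :=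
  List.ofFn fun i => (sv i, (w.get i).1, (w.get i).2)

/-- Probability of observing the observation-action history `w` (most recent first). -/
noncomputable def histProb (ν : S × Y → ℝ) (P : S → A → S × Y → ℝ)
    (π : List (Y × A) → Y → A → ℝ) (w : List (Y × A)) : ℝ :=
  ∑ sv : Fin w.length → S, probTraj ν P π (zipSV w sv)

end

section
set_option linter.unusedSectionVars false
variable {S A Y Z : Type*} [Fintype S] [Fintype A] [Fintype Y] [Fintype Z]
namespace StmtAux

variable {S A Y Z : Type*} [Fintype S] [Fintype A] [Fintype Y] [Fintype Z]
variable {ν : S × Y → ℝ} {P : S → A → S × Y → ℝ} {π : List (Y × A) → Y → A → ℝ}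

/-- The transition factor appearing in `probTraj`. -/
noncomputable def transFac (ν : S × Y → ℝ) (P : S → A → S × Y → ℝ) :
    List (S × Y × A) → S × Y → ℝ
  | [], sy => ν sy
  | (s₀, _, a₀) :: _, sy => P s₀ a₀ sy

lemma probTraj_cons (ν : S × Y → ℝ) (P : S → A → S × Y → ℝ)
    (π : List (Y × A) → Y → A → ℝ) (s : S) (y : Y) (a : A) (rest : List (S × Y × A)) :
    probTraj ν P π ((s, y, a) :: rest) =
      transFac ν P rest (s, y) * π (rest.map fun u => (u.2.1, u.2.2)) y a *
        probTraj ν P π rest := by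
  cases rest with
  | nil => rfl
  | cons hd tl => rcases hd with ⟨s₀, y₀, a₀⟩; rfl

lemma transFac_nonneg (hν0 : ∀ sy, 0 ≤ ν sy) (hP0 : ∀ s a sy, 0 ≤ P s a sy)
    (L : List (S × Y × A)) (sy : S × Y) : 0 ≤ transFac ν P L sy := by
  cases L with
  | nil => exact hν0 sy
  | cons hd tl => rcases hd with ⟨s₀, y₀, a₀⟩; exact hP0 s₀ a₀ sy

lemma sum_transFac (hν1 : ∑ sy : S × Y, ν sy = 1) (hP1 : ∀ s a, ∑ sy : S × Y, P s a sy = 1)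
    (L : List (S × Y × A)) : ∑ sy : S × Y, transFac ν P L sy = 1 := by
  cases L with
  | nil => exact hν1
  | cons hd tl => rcases hd with ⟨s₀, y₀, a₀⟩; exact hP1 s₀ a₀

lemma probTraj_nonneg (hν0 : ∀ sy, 0 ≤ ν sy) (hP0 : ∀ s a sy, 0 ≤ P s a sy)
    (hπ : validPol π) : ∀ L : List (S × Y × A), 0 ≤ probTraj ν P π L
  | [] => by rw [probTraj]; norm_num
  | (s, y, a) :: rest => by
    rw [probTraj_cons]
    exact mul_nonneg (mul_nonneg (transFac_nonneg hν0 hP0 _ _) ((hπ _ y).1 a))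
      (probTraj_nonneg hν0 hP0 hπ rest)

lemma sum_probTraj_cons (hν1 : ∑ sy : S × Y, ν sy = 1)
    (hP1 : ∀ s a, ∑ sy : S × Y, P s a sy = 1) (hπ : validPol π) (L : List (S × Y × A)) :
    ∑ x : S × Y × A, probTraj ν P π (x :: L) = probTraj ν P π L := by
  have step : ∀ (s : S) (y : Y),
      ∑ a : A, probTraj ν P π ((s, y, a) :: L) = transFac ν P L (s, y) * probTraj ν P π L := by
    intro s y
    calc ∑ a : A, probTraj ν P π ((s, y, a) :: L)
        = ∑ a : A, (transFac ν P L (s, y) * probTraj ν P π L) *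
            π (L.map fun u => (u.2.1, u.2.2)) y a := by
          refine Finset.sum_congr rfl fun a _ => ?_
          rw [probTraj_cons]; ring
      _ = (transFac ν P L (s, y) * probTraj ν P π L) *
            ∑ a : A, π (L.map fun u => (u.2.1, u.2.2)) y a := by
          rw [Finset.mul_sum]
      _ = transFac ν P L (s, y) * probTraj ν P π L := by
          rw [(hπ _ y).2, mul_one]
  calc ∑ x : S × Y × A, probTraj ν P π (x :: L)
      = ∑ s : S, ∑ y : Y, ∑ a : A, probTraj ν P π ((s, y, a) :: L) := by
        rw [Fintype.sum_prod_type]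
        exact Finset.sum_congr rfl fun s _ => Fintype.sum_prod_type _
    _ = ∑ s : S, ∑ y : Y, transFac ν P L (s, y) * probTraj ν P π L := by
        exact Finset.sum_congr rfl fun s _ => Finset.sum_congr rfl fun y _ => step s y
    _ = (∑ sy : S × Y, transFac ν P L sy) * probTraj ν P π L := by
        rw [Fintype.sum_prod_type, Finset.sum_mul]
        exact Finset.sum_congr rfl fun s _ => (Finset.sum_mul _ _ _).symm
    _ = probTraj ν P π L := by rw [sum_transFac hν1 hP1, one_mul]

lemma sum_probTraj (hν1 : ∑ sy : S × Y, ν sy = 1)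
    (hP1 : ∀ s a, ∑ sy : S × Y, P s a sy = 1) (hπ : validPol π) :
    ∀ n : ℕ, ∑ v : Fin (n + 1) → S × Y × A, probTraj ν P π (List.ofFn v).reverse = 1 := by
  intro n
  induction n with
  | zero =>
    rw [Fintype.sum_equiv (Equiv.funUnique (Fin 1) (S × Y × A)) _
      (fun x : S × Y × A => probTraj ν P π [x])
      (fun v => by simp [List.ofFn_succ, Equiv.funUnique])]
    simpa using (sum_probTraj_cons hν1 hP1 hπ ([] : List (S × Y × A))).trans
      (show probTraj ν P π ([] : List (S × Y × A)) = 1 from rfl)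
  | succ n ih =>
    rw [← Fintype.sum_equiv (Fin.snocEquiv (fun _ : Fin (n + 2) => S × Y × A))
      (fun q : (S × Y × A) × (Fin (n + 1) → S × Y × A) =>
        probTraj ν P π (q.1 :: (List.ofFn q.2).reverse))
      (fun v : Fin (n + 2) → S × Y × A => probTraj ν P π (List.ofFn v).reverse)
      ?_]
    · rw [Fintype.sum_prod_type_right]
      calc ∑ w : Fin (n + 1) → S × Y × A, ∑ x : S × Y × A,
            probTraj ν P π (x :: (List.ofFn w).reverse)
          = ∑ w : Fin (n + 1) → S × Y × A, probTraj ν P π (List.ofFn w).reverse := by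
            exact Finset.sum_congr rfl fun w _ => sum_probTraj_cons hν1 hP1 hπ _
        _ = 1 := ih
    · intro q
      show probTraj ν P π (q.1 :: (List.ofFn q.2).reverse)
          = probTraj ν P π (List.ofFn (Fin.snocEquiv (fun _ : Fin (n + 2) => S × Y × A) q)).reverse
      have he : Fin.snocEquiv (fun _ : Fin (n + 2) => S × Y × A) q = Fin.snoc q.2 q.1 :=
        funext fun i => rfl
      have hlist : (List.ofFn (Fin.snoc q.2 q.1 : Fin (n + 2) → S × Y × A)).reverse
          = q.1 :: (List.ofFn q.2).reverse := by
        rw [List.ofFn_succ' (Fin.snoc q.2 q.1), Fin.snoc_last, List.concat_eq_append,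
          List.reverse_append]
        simp [Fin.snoc_castSucc]
      rw [he, hlist]

lemma expRtime_nonneg {r : S → A → ℝ} (hr0 : ∀ s a, 0 ≤ r s a)
    (hν0 : ∀ sy, 0 ≤ ν sy) (hP0 : ∀ s a sy, 0 ≤ P s a sy)
    (hπ : validPol π) (t : ℕ) : 0 ≤ expRtime ν P r π t :=
  Finset.sum_nonneg fun v _ =>
    mul_nonneg (probTraj_nonneg hν0 hP0 hπ _) (hr0 _ _)

lemma expRtime_le {r : S → A → ℝ} {Rmax : ℝ} (hrM : ∀ s a, r s a ≤ Rmax)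
    (hν0 : ∀ sy, 0 ≤ ν sy) (hP0 : ∀ s a sy, 0 ≤ P s a sy)
    (hν1 : ∑ sy : S × Y, ν sy = 1) (hP1 : ∀ s a, ∑ sy : S × Y, P s a sy = 1)
    (hπ : validPol π) (t : ℕ) : expRtime ν P r π t ≤ Rmax := by
  have h1 : expRtime ν P r π t ≤
      ∑ v : Fin (t + 1) → S × Y × A, probTraj ν P π (List.ofFn v).reverse * Rmax :=
    Finset.sum_le_sum fun v _ =>
      mul_le_mul_of_nonneg_left (hrM _ _) (probTraj_nonneg hν0 hP0 hπ _)
  rwa [← Finset.sum_mul, sum_probTraj hν1 hP1 hπ t, one_mul] at h1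

lemma summable_geom_seq {g : ℕ → ℝ} {γ C : ℝ} (hγ0 : 0 ≤ γ) (hγ1 : γ < 1)
    (hg0 : ∀ t, 0 ≤ g t) (hgC : ∀ t, g t ≤ C) :
    Summable (fun t : ℕ => γ ^ t * g t) := by
  refine Summable.of_nonneg_of_le
    (fun t => mul_nonneg (pow_nonneg hγ0 t) (hg0 t)) (fun t => ?_)
    ((summable_geometric_of_lt_one hγ0 hγ1).mul_left C)
  calc γ ^ t * g t ≤ γ ^ t * C := mul_le_mul_of_nonneg_left (hgC t) (pow_nonneg hγ0 t)
    _ = C * γ ^ t := mul_comm _ _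

lemma partial_le_tsum_seq {g : ℕ → ℝ} {γ C : ℝ} (hγ0 : 0 ≤ γ) (hγ1 : γ < 1)
    (hg0 : ∀ t, 0 ≤ g t) (hgC : ∀ t, g t ≤ C) (T : ℕ) :
    ∑ t ∈ Finset.range T, γ ^ t * g t ≤ ∑' t : ℕ, γ ^ t * g t :=
  Summable.sum_le_tsum _ (fun t _ => mul_nonneg (pow_nonneg hγ0 t) (hg0 t))
    (summable_geom_seq hγ0 hγ1 hg0 hgC)

lemma tsum_le_partial_add_seq {g : ℕ → ℝ} {γ C : ℝ} (hγ0 : 0 ≤ γ) (hγ1 : γ < 1)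
    (hg0 : ∀ t, 0 ≤ g t) (hgC : ∀ t, g t ≤ C) (T : ℕ) :
    ∑' t : ℕ, γ ^ t * g t ≤ (∑ t ∈ Finset.range T, γ ^ t * g t) + γ ^ T * (C / (1 - γ)) := by
  have hsum := summable_geom_seq hγ0 hγ1 hg0 hgC
  rw [← Summable.sum_add_tsum_nat_add T hsum]
  refine add_le_add le_rfl ?_
  have htail : ∑' i : ℕ, γ ^ (i + T) * g (i + T) ≤ ∑' i : ℕ, (γ ^ T * C) * γ ^ i := by
    refine Summable.tsum_le_tsum (fun i => ?_) ((summable_nat_add_iff T).2 hsum)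
      ((summable_geometric_of_lt_one hγ0 hγ1).mul_left _)
    calc γ ^ (i + T) * g (i + T) ≤ γ ^ (i + T) * C :=
          mul_le_mul_of_nonneg_left (hgC _) (pow_nonneg hγ0 _)
      _ = (γ ^ T * C) * γ ^ i := by rw [pow_add]; ring
  refine htail.trans_eq ?_
  rw [tsum_mul_left, tsum_geometric_of_lt_one hγ0 hγ1, div_eq_mul_inv]
  ring

lemma sum_indicator_split {ι B : Type*} [Fintype ι] [DecidableEq ι] [Fintype B]
    [DecidableEq B] (h : ι → B → ℝ) (p₀ : ι) (hsum : ∑ b : B, h p₀ b = 1)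
    (G : (ι → B) → ℝ) (hG : ∀ c v, G (Function.update c p₀ v) = G c) (b₀ : B) :
    ∑ c : ι → B, (∏ p, h p (c p)) * ((if b₀ = c p₀ then 1 else 0) * G c)
      = h p₀ b₀ * ∑ c : ι → B, (∏ p, h p (c p)) * G c := by
  set e := Equiv.funSplitAt p₀ B with he
  have happ : ∀ (v : B) (c' : { j // j ≠ p₀ } → B) (p : ι),
      e.symm (v, c') p = if hp : p = p₀ then v else c' ⟨p, hp⟩ := by
    intro v c' p
    by_cases hp : p = p₀
    · subst hp; simp [he, Equiv.funSplitAt, Equiv.piSplitAt]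
    · simp [he, Equiv.funSplitAt, Equiv.piSplitAt, hp]
  have hp₀ : ∀ (v : B) (c' : { j // j ≠ p₀ } → B), e.symm (v, c') p₀ = v := by
    intro v c'; rw [happ]; simp
  have key : ∀ F : (ι → B) → ℝ,
      ∑ c : ι → B, F c = ∑ v : B, ∑ c' : { j // j ≠ p₀ } → B, F (e.symm (v, c')) := by
    intro F
    rw [← Equiv.sum_comp e.symm F, Fintype.sum_prod_type]
  set R : ({ j // j ≠ p₀ } → B) → ℝ :=
    fun c' => ∏ p ∈ ({p₀}ᶜ : Finset ι), h p (e.symm (b₀, c') p) with hR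
  set G₀ : ({ j // j ≠ p₀ } → B) → ℝ := fun c' => G (e.symm (b₀, c')) with hG₀
  have hprod : ∀ (v : B) (c' : { j // j ≠ p₀ } → B),
      (∏ p, h p (e.symm (v, c') p)) = h p₀ v * R c' := by
    intro v c'
    rw [Fintype.prod_eq_mul_prod_compl p₀, hp₀]
    congr 1
    refine Finset.prod_congr rfl fun p hp => ?_
    have hpne : p ≠ p₀ := by simpa using hp
    rw [happ, happ]; simp [hpne]
  have hGind : ∀ (v : B) (c' : { j // j ≠ p₀ } → B), G (e.symm (v, c')) = G₀ c' := by
    intro v c'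
    have hup : e.symm (v, c') = Function.update (e.symm (b₀, c')) p₀ v := by
      funext p
      by_cases hp : p = p₀
      · subst hp; rw [hp₀, Function.update_self]
      · rw [Function.update_of_ne hp, happ, happ]; simp [hp]
    rw [hup, hG]
  have lhs_eq : ∑ c : ι → B, (∏ p, h p (c p)) * ((if b₀ = c p₀ then 1 else 0) * G c)
      = (∑ v : B, h p₀ v * (if b₀ = v then 1 else 0)) *
          ∑ c' : { j // j ≠ p₀ } → B, R c' * G₀ c' := by
    rw [key, Finset.sum_mul_sum]
    refine Finset.sum_congr rfl fun v _ => Finset.sum_congr rfl fun c' _ => ?_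
    rw [hprod, hp₀, hGind]
    ring
  have rhs_eq : ∑ c : ι → B, (∏ p, h p (c p)) * G c
      = (∑ v : B, h p₀ v) * ∑ c' : { j // j ≠ p₀ } → B, R c' * G₀ c' := by
    rw [key, Finset.sum_mul_sum]
    refine Finset.sum_congr rfl fun v _ => Finset.sum_congr rfl fun c' _ => ?_
    rw [hprod, hGind]
    ring
  rw [lhs_eq, rhs_eq, hsum]
  have : ∑ v : B, h p₀ v * (if b₀ = v then 1 else 0) = h p₀ b₀ := by
    rw [Finset.sum_eq_single b₀]
    · simp
    · intro b _ hb; simp [Ne.symm hb]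
    · intro hb; exact absurd (Finset.mem_univ b₀) hb
  rw [this]
  ring

end StmtAux
end


section

variable {S A Y Z : Type*} [Fintype S] [Fintype A] [Fintype Y] [Fintype Z]
variable [DecidableEq A]

/-- Non-stationary deterministic agent-state based policies (the decision rule may depend
on the time index, i.e. the length of the history). -/
def isND (φ0 : Y → Z) (φ : Z → Y → A → Z) (π : List (Y × A) → Y → A → ℝ) : Prop :=
  ∃ g : ℕ → Z → A, ∀ past y a,
    π past y a = if a = g past.length (sigAgg φ0 φ past y) then 1 else 0

/-- Non-stationary stochastic agent-state based policies. -/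
def isNS (φ0 : Y → Z) (φ : Z → Y → A → Z) (π : List (Y × A) → Y → A → ℝ) : Prop :=
  ∃ g : ℕ → Z → A → ℝ, ∀ past y, π past y = g past.length (sigAgg φ0 φ past y)

namespace StmtAux
set_option linter.unusedSectionVars false
variable {ν : S × Y → ℝ} {P : S → A → S × Y → ℝ} {π : List (Y × A) → Y → A → ℝ}
set_option maxHeartbeats 1000000

variable [DecidableEq A] [DecidableEq Z]

/-- Deterministic policy induced by a time-dependent decision rule on agent states. -/
noncomputable def detOf (φ0 : Y → Z) (φ : Z → Y → A → Z) (f : ℕ → Z → A) :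
    List (Y × A) → Y → A → ℝ :=
  fun past y a => if a = f past.length (sigAgg φ0 φ past y) then 1 else 0

lemma validPol_detOf (φ0 : Y → Z) (φ : Z → Y → A → Z) (f : ℕ → Z → A) :
    validPol (detOf φ0 φ f) := by
  intro h y
  constructor
  · intro a; unfold detOf; split <;> norm_num
  · simp [detOf]

lemma isND_detOf (φ0 : Y → Z) (φ : Z → Y → A → Z) (f : ℕ → Z → A) :
    isND φ0 φ (detOf φ0 φ f) := ⟨f, fun _ _ _ => rfl⟩

/-- Extension of finitely many decision rules to all times. -/
noncomputable def extC (T : ℕ) (a0 : A) (c : Fin T × Z → A) : ℕ → Z → A :=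
  fun n z => if h : n < T then c (⟨n, h⟩, z) else a0

lemma probTraj_detOf_congr (φ0 : Y → Z) (φ : Z → Y → A → Z) :
    ∀ (L : List (S × Y × A)) (f f' : ℕ → Z → A),
      (∀ n z, n < L.length → f n z = f' n z) →
      probTraj ν P (detOf φ0 φ f) L = probTraj ν P (detOf φ0 φ f') L
  | [], f, f', _ => rfl
  | (s, y, a) :: rest, f, f', hff => by
    rw [probTraj_cons, probTraj_cons]
    have hl : (rest.map fun u : S × Y × A => (u.2.1, u.2.2)).length = rest.length :=
      List.length_map _
    have h1 : detOf φ0 φ f (rest.map fun u => (u.2.1, u.2.2)) y a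
        = detOf φ0 φ f' (rest.map fun u => (u.2.1, u.2.2)) y a := by
      unfold detOf
      rw [hl, hff rest.length _ (by simp)]
    have h2 := probTraj_detOf_congr φ0 φ rest f f'
      (fun n z hn => hff n z (by simp; omega))
    rw [h1, h2]

lemma sum_prodW (g : ℕ → Z → A → ℝ) (hg : ∀ n z, (∀ a, 0 ≤ g n z a) ∧ ∑ a, g n z a = 1)
    (T : ℕ) :
    ∑ c : Fin T × Z → A, ∏ p : Fin T × Z, g (p.1 : ℕ) p.2 (c p) = 1 := by
  classical
  rw [← Fintype.prod_sum (fun (p : Fin T × Z) (a : A) => g (p.1 : ℕ) p.2 a)]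
  exact Finset.prod_eq_one fun p _ => (hg _ _).2

lemma probTraj_mix (φ0 : Y → Z) (φ : Z → Y → A → Z) (g : ℕ → Z → A → ℝ)
    (hg : ∀ n z, (∀ a, 0 ≤ g n z a) ∧ ∑ a, g n z a = 1) (T : ℕ) (a0 : A) :
    ∀ L : List (S × Y × A), L.length ≤ T →
      ∑ c : Fin T × Z → A, (∏ p : Fin T × Z, g (p.1 : ℕ) p.2 (c p)) *
          probTraj ν P (detOf φ0 φ (extC T a0 c)) L
        = probTraj ν P (fun past y => g past.length (sigAgg φ0 φ past y)) L := by
  classical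
  intro L
  induction L with
  | nil =>
    intro _
    show _ = (1 : ℝ)
    calc ∑ c : Fin T × Z → A, (∏ p : Fin T × Z, g (p.1 : ℕ) p.2 (c p)) *
            probTraj ν P (detOf φ0 φ (extC T a0 c)) []
        = ∑ c : Fin T × Z → A, ∏ p : Fin T × Z, g (p.1 : ℕ) p.2 (c p) := by
          refine Finset.sum_congr rfl fun c _ => ?_
          show _ * (1 : ℝ) = _
          rw [mul_one]
      _ = 1 := sum_prodW g hg T
  | cons x rest ih =>
    rcases x with ⟨s, y, a⟩
    intro hlen
    have hn : rest.length < T := by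
      simp only [List.length_cons] at hlen; omega
    have hpl : (rest.map fun u : S × Y × A => (u.2.1, u.2.2)).length = rest.length :=
      List.length_map _
    set z := sigAgg φ0 φ (rest.map fun u : S × Y × A => (u.2.1, u.2.2)) y with hz
    set p₀ : Fin T × Z := (⟨rest.length, hn⟩, z) with hp₀def
    have hpol : ∀ c : Fin T × Z → A,
        detOf φ0 φ (extC T a0 c) (rest.map fun u => (u.2.1, u.2.2)) y a
          = if a = c p₀ then 1 else 0 := by
      intro c
      unfold detOf extC
      rw [hpl, dif_pos hn]
    set G : (Fin T × Z → A) → ℝ :=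
      fun c => probTraj ν P (detOf φ0 φ (extC T a0 c)) rest with hGdef
    have hG : ∀ c v, G (Function.update c p₀ v) = G c := by
      intro c v
      refine probTraj_detOf_congr φ0 φ rest _ _ ?_
      intro n z' hn'
      unfold extC
      by_cases h : n < T
      · rw [dif_pos h, dif_pos h, Function.update_of_ne]
        simp only [hp₀def, Ne, Prod.mk.injEq, Fin.mk.injEq, not_and]
        intro hcontra
        omega
      · rw [dif_neg h, dif_neg h]
    have hGrest : ∑ c : Fin T × Z → A,
        (∏ p : Fin T × Z, g (p.1 : ℕ) p.2 (c p)) * G c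
        = probTraj ν P (fun past y => g past.length (sigAgg φ0 φ past y)) rest :=
      ih (le_of_lt hn)
    calc ∑ c : Fin T × Z → A, (∏ p : Fin T × Z, g (p.1 : ℕ) p.2 (c p)) *
            probTraj ν P (detOf φ0 φ (extC T a0 c)) ((s, y, a) :: rest)
        = ∑ c : Fin T × Z → A, (∏ p : Fin T × Z, g (p.1 : ℕ) p.2 (c p)) *
            (transFac ν P rest (s, y) * ((if a = c p₀ then 1 else 0) * G c)) := by
          refine Finset.sum_congr rfl fun c _ => ?_
          rw [probTraj_cons, hpol c]
          show _ = _ * (_ * (_ * G c))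
          rw [hGdef]
          ring
      _ = transFac ν P rest (s, y) * ∑ c : Fin T × Z → A,
            (∏ p : Fin T × Z, g (p.1 : ℕ) p.2 (c p)) * ((if a = c p₀ then 1 else 0) * G c) := by
          rw [Finset.mul_sum]
          exact Finset.sum_congr rfl fun c _ => by ring
      _ = transFac ν P rest (s, y) * ((g rest.length z a) * ∑ c : Fin T × Z → A,
            (∏ p : Fin T × Z, g (p.1 : ℕ) p.2 (c p)) * G c) := by
          rw [sum_indicator_split (fun (p : Fin T × Z) (b : A) => g (p.1 : ℕ) p.2 b) p₀
            ((hg _ _).2) G hG a]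
      _ = probTraj ν P (fun past y => g past.length (sigAgg φ0 φ past y)) ((s, y, a) :: rest) := by
          rw [hGrest, probTraj_cons, hpl]
          ring

lemma expRtime_mix (φ0 : Y → Z) (φ : Z → Y → A → Z) (g : ℕ → Z → A → ℝ)
    (hg : ∀ n z, (∀ a, 0 ≤ g n z a) ∧ ∑ a, g n z a = 1) (T : ℕ) (a0 : A)
    {r : S → A → ℝ} (t : ℕ) (ht : t + 1 ≤ T) :
    expRtime ν P r (fun past y => g past.length (sigAgg φ0 φ past y)) t
      = ∑ c : Fin T × Z → A, (∏ p : Fin T × Z, g (p.1 : ℕ) p.2 (c p)) *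
          expRtime ν P r (detOf φ0 φ (extC T a0 c)) t := by
  classical
  unfold expRtime
  calc ∑ v : Fin (t + 1) → S × Y × A,
        probTraj ν P (fun past y => g past.length (sigAgg φ0 φ past y)) (List.ofFn v).reverse *
          r (v (Fin.last t)).1 (v (Fin.last t)).2.2
      = ∑ v : Fin (t + 1) → S × Y × A, ∑ c : Fin T × Z → A,
          ((∏ p : Fin T × Z, g (p.1 : ℕ) p.2 (c p)) *
            probTraj ν P (detOf φ0 φ (extC T a0 c)) (List.ofFn v).reverse) *
          r (v (Fin.last t)).1 (v (Fin.last t)).2.2 := by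
        refine Finset.sum_congr rfl fun v _ => ?_
        rw [← Finset.sum_mul, probTraj_mix φ0 φ g hg T a0 (List.ofFn v).reverse
          (by rw [List.length_reverse, List.length_ofFn]; exact ht)]
    _ = ∑ c : Fin T × Z → A, ∑ v : Fin (t + 1) → S × Y × A,
          ((∏ p : Fin T × Z, g (p.1 : ℕ) p.2 (c p)) *
            probTraj ν P (detOf φ0 φ (extC T a0 c)) (List.ofFn v).reverse) *
          r (v (Fin.last t)).1 (v (Fin.last t)).2.2 := Finset.sum_comm
    _ = ∑ c : Fin T × Z → A, (∏ p : Fin T × Z, g (p.1 : ℕ) p.2 (c p)) *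
          ∑ v : Fin (t + 1) → S × Y × A,
            probTraj ν P (detOf φ0 φ (extC T a0 c)) (List.ofFn v).reverse *
            r (v (Fin.last t)).1 (v (Fin.last t)).2.2 := by
        refine Finset.sum_congr rfl fun c _ => ?_
        rw [Finset.mul_sum]
        exact Finset.sum_congr rfl fun v _ => by ring

end StmtAux


/-- **No gain from stochastic non-stationary agent-state policies:** `J_ZNS = J_ZND`. -/
theorem stmt_18 [Nonempty A]
    (γ : ℝ) (hγ0 : 0 < γ) (hγ1 : γ < 1)
    (Rmax : ℝ) (r : S → A → ℝ) (hr : ∀ s a, r s a ∈ Set.Icc (0 : ℝ) Rmax)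
    (ν : S × Y → ℝ) (hν0 : ∀ sy, 0 ≤ ν sy) (hν1 : ∑ sy : S × Y, ν sy = 1)
    (P : S → A → S × Y → ℝ) (hP0 : ∀ s a sy, 0 ≤ P s a sy)
    (hP1 : ∀ s a, ∑ sy : S × Y, P s a sy = 1)
    (φ0 : Y → Z) (φ : Z → Y → A → Z) :
    (⨆ π : {π : List (Y × A) → Y → A → ℝ // validPol π ∧ isNS φ0 φ π},
        valJ γ ν P r π.1) =
      ⨆ π : {π : List (Y × A) → Y → A → ℝ // validPol π ∧ isND φ0 φ π},
        valJ γ ν P r π.1 := by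
  classical
  have hSY : Nonempty (S × Y) := by
    by_contra h
    rw [not_nonempty_iff] at h
    rw [Finset.univ_eq_empty, Finset.sum_empty] at hν1
    exact one_ne_zero hν1.symm
  obtain ⟨⟨s₀, y₀⟩⟩ := hSY
  have a0 : A := Classical.arbitrary A
  have hr0 : ∀ s a, 0 ≤ r s a := fun s a => (hr s a).1
  have hrM : ∀ s a, r s a ≤ Rmax := fun s a => (hr s a).2
  have hRmax0 : (0 : ℝ) ≤ Rmax := le_trans (hr0 s₀ a0) (hrM s₀ a0)
  set C : ℝ := Rmax / (1 - γ) with hC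
  have hC0 : 0 ≤ C := div_nonneg hRmax0 (by linarith)
  have hvalJle : ∀ π : List (Y × A) → Y → A → ℝ, validPol π → valJ γ ν P r π ≤ C := by
    intro π hπ
    have h := StmtAux.tsum_le_partial_add_seq (g := fun t => expRtime ν P r π t)
      (C := Rmax) hγ0.le hγ1
      (fun t => StmtAux.expRtime_nonneg hr0 hν0 hP0 hπ t)
      (fun t => StmtAux.expRtime_le hrM hν0 hP0 hν1 hP1 hπ t) 0
    simpa [valJ, hC] using h
  have hNDtoNS : ∀ π, isND φ0 φ π → isNS φ0 φ π := by
    rintro π ⟨f, hf⟩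
    exact ⟨fun n z a => if a = f n z then 1 else 0,
      fun past y => funext fun a => hf past y a⟩
  have hdefvalid := StmtAux.validPol_detOf φ0 φ (fun _ _ => a0)
  have hdefND := StmtAux.isND_detOf φ0 φ (fun _ _ => a0)
  haveI hNE_ND : Nonempty {π : List (Y × A) → Y → A → ℝ // validPol π ∧ isND φ0 φ π} :=
    ⟨⟨StmtAux.detOf φ0 φ (fun _ _ => a0), hdefvalid, hdefND⟩⟩
  haveI hNE_NS : Nonempty {π : List (Y × A) → Y → A → ℝ // validPol π ∧ isNS φ0 φ π} :=
    ⟨⟨StmtAux.detOf φ0 φ (fun _ _ => a0), hdefvalid, hNDtoNS _ hdefND⟩⟩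
  have hbddNS : BddAbove (Set.range fun π :
      {π : List (Y × A) → Y → A → ℝ // validPol π ∧ isNS φ0 φ π} => valJ γ ν P r π.1) :=
    ⟨C, by rintro x ⟨π, rfl⟩; exact hvalJle π.1 π.2.1⟩
  have hbddND : BddAbove (Set.range fun π :
      {π : List (Y × A) → Y → A → ℝ // validPol π ∧ isND φ0 φ π} => valJ γ ν P r π.1) :=
    ⟨C, by rintro x ⟨π, rfl⟩; exact hvalJle π.1 π.2.1⟩
  refine le_antisymm ?_ ?_
  · refine ciSup_le fun πp => ?_
    obtain ⟨π, hπval, hπNS⟩ := πp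
    obtain ⟨g, hgform⟩ := hπNS
    set g' : ℕ → Z → A → ℝ := fun n z =>
      if _ : ∃ past : List (Y × A), ∃ y : Y, past.length = n ∧ sigAgg φ0 φ past y = z
      then g n z else fun a => if a = a0 then 1 else 0 with hg'def
    have hg' : ∀ n z, (∀ a, 0 ≤ g' n z a) ∧ ∑ a, g' n z a = 1 := by
      intro n z
      rw [hg'def]
      dsimp only
      split_ifs with h
      · obtain ⟨past, y, hlen, hsig⟩ := h
        have hv := hπval past y
        rw [hgform past y, hlen, hsig] at hv
        exact hv
      · constructor
        · intro a; by_cases ha : a = a0 <;> simp [ha]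
        · simp
    have hπform : π = fun past y => g' past.length (sigAgg φ0 φ past y) := by
      funext past y
      rw [hg'def]
      dsimp only
      rw [dif_pos ⟨past, y, rfl, rfl⟩]
      exact hgform past y
    show valJ γ ν P r π ≤ _
    refine le_of_forall_pos_le_add fun ε hε => ?_
    obtain ⟨T, hT⟩ : ∃ T : ℕ, γ ^ T * C < ε := by
      rcases eq_or_lt_of_le hC0 with hC0' | hC0'
      · exact ⟨0, by rw [← hC0']; simpa using hε⟩
      · obtain ⟨T, hT⟩ := exists_pow_lt_of_lt_one (div_pos hε hC0') hγ1
        exact ⟨T, by rw [lt_div_iff₀ hC0'] at hT; linarith⟩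
    set W : (Fin T × Z → A) → ℝ :=
      fun c => ∏ p : Fin T × Z, g' (p.1 : ℕ) p.2 (c p) with hW
    have hW0 : ∀ c, 0 ≤ W c := fun c => Finset.prod_nonneg fun p _ => (hg' _ _).1 _
    have hW1 : ∑ c, W c = 1 := StmtAux.sum_prodW g' hg' T
    set pc : (Fin T × Z → A) → List (Y × A) → Y → A → ℝ :=
      fun c => StmtAux.detOf φ0 φ (StmtAux.extC T a0 c) with hpc
    set V : (Fin T × Z → A) → ℝ :=
      fun c => ∑ t ∈ Finset.range T, γ ^ t * expRtime ν P r (pc c) t with hV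
    have hmix : ∀ t, t < T → expRtime ν P r π t = ∑ c, W c * expRtime ν P r (pc c) t := by
      intro t ht
      rw [hπform]
      exact StmtAux.expRtime_mix φ0 φ g' hg' T a0 t ht
    have hpartial : ∑ t ∈ Finset.range T, γ ^ t * expRtime ν P r π t = ∑ c, W c * V c := by
      calc ∑ t ∈ Finset.range T, γ ^ t * expRtime ν P r π t
          = ∑ t ∈ Finset.range T, ∑ c, γ ^ t * (W c * expRtime ν P r (pc c) t) := by
            refine Finset.sum_congr rfl fun t ht => ?_
            rw [hmix t (Finset.mem_range.mp ht), Finset.mul_sum]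
        _ = ∑ c, ∑ t ∈ Finset.range T, γ ^ t * (W c * expRtime ν P r (pc c) t) :=
            Finset.sum_comm
        _ = ∑ c, W c * V c := by
            refine Finset.sum_congr rfl fun c _ => ?_
            rw [hV]
            dsimp only
            rw [Finset.mul_sum]
            exact Finset.sum_congr rfl fun t _ => by ring
    haveI : Nonempty (Fin T × Z → A) := ⟨fun _ => a0⟩
    obtain ⟨cs, -, hcs⟩ := Finset.exists_max_image Finset.univ V Finset.univ_nonempty
    have hle1 : ∑ c, W c * V c ≤ V cs := by
      calc ∑ c, W c * V c ≤ ∑ c, W c * V cs :=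
            Finset.sum_le_sum fun c _ =>
              mul_le_mul_of_nonneg_left (hcs c (Finset.mem_univ c)) (hW0 c)
        _ = V cs := by rw [← Finset.sum_mul, hW1, one_mul]
    have hvalid_cs : validPol (pc cs) := StmtAux.validPol_detOf φ0 φ _
    have h1 : valJ γ ν P r π ≤
        (∑ t ∈ Finset.range T, γ ^ t * expRtime ν P r π t) + γ ^ T * C := by
      have h := StmtAux.tsum_le_partial_add_seq (g := fun t => expRtime ν P r π t)
        (C := Rmax) hγ0.le hγ1
        (fun t => StmtAux.expRtime_nonneg hr0 hν0 hP0 hπval t)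
        (fun t => StmtAux.expRtime_le hrM hν0 hP0 hν1 hP1 hπval t) T
      simpa [valJ, hC] using h
    have h2 : V cs ≤ valJ γ ν P r (pc cs) := by
      have h := StmtAux.partial_le_tsum_seq (g := fun t => expRtime ν P r (pc cs) t)
        (C := Rmax) hγ0.le hγ1
        (fun t => StmtAux.expRtime_nonneg hr0 hν0 hP0 hvalid_cs t)
        (fun t => StmtAux.expRtime_le hrM hν0 hP0 hν1 hP1 hvalid_cs t) T
      simpa [valJ, hV] using h
    have h3 : valJ γ ν P r (pc cs) ≤
        ⨆ π : {π : List (Y × A) → Y → A → ℝ // validPol π ∧ isND φ0 φ π},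
          valJ γ ν P r π.1 :=
      le_ciSup hbddND (⟨pc cs, hvalid_cs, StmtAux.isND_detOf φ0 φ _⟩ :
        {π : List (Y × A) → Y → A → ℝ // validPol π ∧ isND φ0 φ π})
    linarith [hpartial]
  · refine ciSup_le fun πp => ?_
    exact le_ciSup_of_le hbddNS ⟨πp.1, πp.2.1, hNDtoNS πp.1 πp.2.2⟩ (le_refl _)

end
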